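/- For n ≥ 2 and q with gcd(q,n)=1, 0 < q < n: the cyclic quotient singularity ℂ²/⟨τ⟩ of type (1/n)(1,q) (τ acting by (ζ_n x, ζ_n^q y)) arising from the cherry graph with enhancements a ≤ b on short and long edges has n = b/gcd(a,b) and q = (b-a)/gcd(a,b). Equivalently: with N' = ⟨(ℓ₁,0),(0,ℓ₂)⟩ where ℓ₁ = lcm(a,b), ℓ₂ = b, and N = ⟨(a,-a),(0,ℓ₂)⟩ ⊂ ℚ², the index [N : N'] equals ℓ₁/a = b/gcd(a,b). -/

import Mathlib

/-- For the cherry graph with enhancements `a ≤ b` (`a, b ≥ 1`) on the short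
and long edges, the simple twist group lattice is `N' = ⟨(ℓ₁, 0), (0, ℓ₂)⟩ ⊂ ℚ²` with
`ℓ₁ = lcm(a,b)`, `ℓ₂ = b`, the twist group lattice is `N = ⟨(a, -a), (0, ℓ₂)⟩ ⊂ ℚ²`, and
the index satisfies `[N : N'] = ℓ₁/a = b/gcd(a,b)` (so the resulting cyclic quotient
singularity of type `(1/n)(1,q)` has `n = b/gcd(a,b)`). -/
theorem stmt16 (a b : ℕ) (ha : 1 ≤ a) (hab : a ≤ b) :
    let N' : AddSubgroup (ℚ × ℚ) :=
      AddSubgroup.closure {((Nat.lcm a b : ℚ), (0 : ℚ)), ((0 : ℚ), (b : ℚ))}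
    let N : AddSubgroup (ℚ × ℚ) :=
      AddSubgroup.closure {((a : ℚ), -(a : ℚ)), ((0 : ℚ), (b : ℚ))}
    N' ≤ N ∧ N'.relIndex N = Nat.lcm a b / a ∧ Nat.lcm a b / a = b / Nat.gcd a b := by
  intro N' N
  have ha' : 0 < a := ha
  have hb' : 0 < b := lt_of_lt_of_le ha' hab
  have haQ : (a : ℚ) ≠ 0 := by exact_mod_cast ha'.ne'
  have hbQ : (b : ℚ) ≠ 0 := by exact_mod_cast hb'.ne'
  set k : ℕ := Nat.lcm a b / a with hk
  set d : ℕ := Nat.lcm a b / b with hd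
  have hka : k * a = Nat.lcm a b := Nat.div_mul_cancel (Nat.dvd_lcm_left a b)
  have hdb : d * b = Nat.lcm a b := Nat.div_mul_cancel (Nat.dvd_lcm_right a b)
  -- the parametrizing homomorphism
  set f : ℤ × ℤ →+ ℚ × ℚ :=
    { toFun := fun p => ((p.1 : ℚ) * a, -((p.1 : ℚ) * a) + (p.2 : ℚ) * b)
      map_zero' := by simp
      map_add' := by
        intro p q
        simp only [Prod.fst_add, Prod.snd_add, Prod.mk_add_mk, Prod.mk.injEq]
        push_cast
        constructor <;> ring } with hf
  have hfval : ∀ p : ℤ × ℤ, f p = ((p.1 : ℚ) * a, -((p.1 : ℚ) * a) + (p.2 : ℚ) * b) := by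
    intro p; rfl
  have hinj : Function.Injective f := by
    intro p q h
    rw [hfval, hfval, Prod.mk.injEq] at h
    have h1 : (p.1 : ℚ) = q.1 := mul_right_cancel₀ haQ h.1
    have h2 : (p.2 : ℚ) * b = (q.2 : ℚ) * b := by
      have := h.2; rw [h1] at this; linarith
    have h2' : (p.2 : ℚ) = q.2 := mul_right_cancel₀ hbQ h2
    have : p.1 = q.1 := by exact_mod_cast h1
    have : p.2 = q.2 := by exact_mod_cast h2'
    exact Prod.ext ‹p.1 = q.1› ‹p.2 = q.2›
  -- images of key lattice points
  have hf10 : f (1, 0) = ((a : ℚ), -(a : ℚ)) := by rw [hfval]; norm_num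
  have hf01 : f (0, 1) = ((0 : ℚ), (b : ℚ)) := by rw [hfval]; norm_num
  have hfkd : f ((k : ℤ), (d : ℤ)) = ((Nat.lcm a b : ℚ), (0 : ℚ)) := by
    rw [hfval, Prod.mk.injEq]
    have h1 : ((k : ℤ) : ℚ) * a = (Nat.lcm a b : ℚ) := by exact_mod_cast congrArg (Nat.cast : ℕ → ℚ) hka
    have h2 : ((d : ℤ) : ℚ) * b = (Nat.lcm a b : ℚ) := by exact_mod_cast congrArg (Nat.cast : ℕ → ℚ) hdb
    exact ⟨h1, by rw [h1, h2]; ring⟩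
  have hsmul : ∀ (m n : ℤ), f (m, n) = m • ((a : ℚ), -(a : ℚ)) + n • ((0 : ℚ), (b : ℚ)) := by
    intro m n
    rw [hfval, Prod.smul_mk, Prod.smul_mk, Prod.mk_add_mk, Prod.mk.injEq]
    simp only [zsmul_eq_mul]
    constructor <;> ring
  -- N is the image of the full lattice
  have hNtop : AddSubgroup.map f ⊤ = N := by
    apply le_antisymm
    · rintro x ⟨⟨m, n⟩, -, rfl⟩
      rw [hsmul]
      exact add_mem (AddSubgroup.zsmul_mem _ (AddSubgroup.subset_closure (by simp)) m)
        (AddSubgroup.zsmul_mem _ (AddSubgroup.subset_closure (by simp)) n)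
    · rw [AddSubgroup.closure_le]
      rintro x (rfl | rfl)
      · exact ⟨(1, 0), trivial, hf10⟩
      · exact ⟨(0, 1), trivial, hf01⟩
  -- N' is the image of the sublattice M'
  set M' : AddSubgroup (ℤ × ℤ) := AddSubgroup.closure {((k : ℤ), (d : ℤ)), (0, 1)} with hM'
  have hNmap : AddSubgroup.map f M' = N' := by
    rw [hM', AddMonoidHom.map_closure, Set.image_insert_eq, Set.image_singleton, hfkd, hf01]
  -- M' is a product
  have hMprod : M' = (AddSubgroup.zmultiples (k : ℤ)).prod ⊤ := by
    apply le_antisymm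
    · rw [hM', AddSubgroup.closure_le]
      rintro x (rfl | rfl)
      · exact ⟨AddSubgroup.mem_zmultiples _, trivial⟩
      · exact ⟨zero_mem _, trivial⟩
    · rintro ⟨x, y⟩ ⟨hx, -⟩
      obtain ⟨t, rfl⟩ := AddSubgroup.mem_zmultiples_iff.mp hx
      have hgen1 : ((k : ℤ), (d : ℤ)) ∈ M' := AddSubgroup.subset_closure (by simp)
      have hgen2 : ((0 : ℤ), (1 : ℤ)) ∈ M' := AddSubgroup.subset_closure (by simp)
      have : (t • (k : ℤ), y) = t • ((k : ℤ), (d : ℤ)) + (y - t * d) • ((0 : ℤ), (1 : ℤ)) := by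
        rw [Prod.smul_mk, Prod.smul_mk, Prod.mk_add_mk, Prod.mk.injEq]
        simp only [zsmul_eq_mul]
        constructor <;> push_cast <;> ring
      rw [this]
      exact add_mem (AddSubgroup.zsmul_mem _ hgen1 t) (AddSubgroup.zsmul_mem _ hgen2 _)
  -- index of M' in ℤ × ℤ is k
  have hMindex : M'.index = k := by
    rw [hMprod, AddSubgroup.index_prod, AddSubgroup.index_top, Int.index_zmultiples,
      Int.natAbs_natCast, mul_one]
  -- transfer the index computation
  have hrel : N'.relIndex N = k := by
    have h1 := AddSubgroup.relIndex_comap N' f (⊤ : AddSubgroup (ℤ × ℤ))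
    rw [hNtop, ← hNmap, AddSubgroup.comap_map_eq_self_of_injective hinj,
      AddSubgroup.relIndex_top_right, hNmap] at h1
    rw [← h1, hMindex]
  -- final arithmetic
  have harith : Nat.lcm a b / a = b / Nat.gcd a b := by
    have hlcm : Nat.lcm a b = a * (b / Nat.gcd a b) := by
      rw [Nat.lcm, Nat.mul_div_assoc a (Nat.gcd_dvd_right a b)]
    rw [hlcm, Nat.mul_div_cancel_left _ ha']
  refine ⟨?_, by rw [hrel, hk], harith⟩
  rw [← hNmap, ← hNtop]
  exact AddSubgroup.map_mono le_top
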